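/- Let s ∈ [0,1/2] and define the qutrit density matrices ρ¹ = diag(1,0,0), ρ² = diag(0,s,1−s), and ρ̄ = ½ρ¹ + ½ρ². Then [S(N_s(ρ̄)) − S(N_s^c(ρ̄))] − ½[S(N_s(ρ¹)) − S(N_s^c(ρ¹))] − ½[S(N_s(ρ²)) − S(N_s^c(ρ²))] = 1. (This shows the channel private information satisfies P^{(1)}(N_s) ≥ 1.) -/

import Mathlib

open Matrix ComplexOrder

/-- Von Neumann entropy (base-2) of a matrix: −∑ λᵢ log₂ λᵢ over its eigenvalues
(0 if the matrix is not Hermitian). -/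
noncomputable def vnEntropy {n : ℕ} (ρ : Matrix (Fin n) (Fin n) ℂ) : ℝ :=
  if h : ρ.IsHermitian then -∑ i, (h.eigenvalues i) * Real.logb 2 (h.eigenvalues i) else 0

/-- Kraus operator K₀ = √s|0⟩⟨0| + |2⟩⟨1| of N_s. -/
noncomputable def Kr0 (s : ℝ) : Matrix (Fin 3) (Fin 3) ℂ :=
  !![(Real.sqrt s : ℂ), 0, 0; 0, 0, 0; 0, 1, 0]

/-- Kraus operator K₁ = √(1−s)|1⟩⟨0| + |2⟩⟨2| of N_s. -/
noncomputable def Kr1 (s : ℝ) : Matrix (Fin 3) (Fin 3) ℂ :=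
  !![0, 0, 0; (Real.sqrt (1 - s) : ℂ), 0, 0; 0, 0, 1]

/-- The channel N_s. -/
noncomputable def chanNs (s : ℝ) (X : Matrix (Fin 3) (Fin 3) ℂ) : Matrix (Fin 3) (Fin 3) ℂ :=
  Kr0 s * X * (Kr0 s)ᴴ + Kr1 s * X * (Kr1 s)ᴴ

/-- Kraus operator L₀ = √s|0⟩⟨0| of N_s^c. -/
noncomputable def Lr0 (s : ℝ) : Matrix (Fin 2) (Fin 3) ℂ :=
  !![(Real.sqrt s : ℂ), 0, 0; 0, 0, 0]

/-- Kraus operator L₁ = √(1−s)|1⟩⟨0| of N_s^c. -/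
noncomputable def Lr1 (s : ℝ) : Matrix (Fin 2) (Fin 3) ℂ :=
  !![0, 0, 0; (Real.sqrt (1 - s) : ℂ), 0, 0]

/-- Kraus operator L₂ = |0⟩⟨1| + |1⟩⟨2| of N_s^c. -/
noncomputable def Lr2 : Matrix (Fin 2) (Fin 3) ℂ :=
  !![0, 1, 0; 0, 0, 1]

/-- The complementary channel N_s^c. -/
noncomputable def chanNsc (s : ℝ) (X : Matrix (Fin 3) (Fin 3) ℂ) : Matrix (Fin 2) (Fin 2) ℂ :=
  Lr0 s * X * (Lr0 s)ᴴ + Lr1 s * X * (Lr1 s)ᴴ + Lr2 * X * Lr2ᴴ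

open Polynomial in
/-- Summing a function over the eigenvalues of a real diagonal matrix is the same as
summing it over the diagonal entries. -/
lemma eig_sum {n : ℕ} (v : Fin n → ℝ) (f : ℝ → ℝ)
    (hA : (Matrix.diagonal (fun i => ((v i : ℝ) : ℂ))).IsHermitian) :
    ∑ i, f (hA.eigenvalues i) = ∑ i, f (v i) := by
  set A := Matrix.diagonal (fun i => ((v i : ℝ) : ℂ)) with hAdef
  set U : Matrix (Fin n) (Fin n) ℂ := (hA.eigenvectorUnitary : Matrix (Fin n) (Fin n) ℂ)
  have hUU : U * star U = 1 := Matrix.mem_unitaryGroup_iff.mp hA.eigenvectorUnitary.2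
  set D : Matrix (Fin n) (Fin n) ℂ := Matrix.diagonal (fun i => ((hA.eigenvalues i : ℝ) : ℂ))
  have hsp : A = U * D * star U := by
    have := hA.spectral_theorem
    exact this
  have hdetdiag : ∀ (d : Fin n → ℂ) (t : ℂ),
      Matrix.det (t • (1 : Matrix (Fin n) (Fin n) ℂ) - Matrix.diagonal d) = ∏ i, (t - d i) := by
    intro d t
    have : t • (1 : Matrix (Fin n) (Fin n) ℂ) - Matrix.diagonal d
        = Matrix.diagonal (fun i => t - d i) := by
      ext i j
      by_cases h : i = j <;> simp [h, Matrix.one_apply, Matrix.diagonal]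
    rw [this, Matrix.det_diagonal]
  have hkey : ∀ t : ℂ, ∏ i, (t - ((hA.eigenvalues i : ℝ) : ℂ)) = ∏ i, (t - ((v i : ℝ) : ℂ)) := by
    intro t
    have hC : t • (1 : Matrix (Fin n) (Fin n) ℂ) - A
        = U * (t • (1 : Matrix (Fin n) (Fin n) ℂ) - D) * star U := by
      rw [Matrix.mul_sub, Matrix.sub_mul, hsp]
      congr 1
      rw [Matrix.mul_smul, mul_one, Matrix.smul_mul, hUU]
    have hdet : Matrix.det (t • (1 : Matrix (Fin n) (Fin n) ℂ) - A)
        = Matrix.det (t • (1 : Matrix (Fin n) (Fin n) ℂ) - D) := by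
      rw [hC, Matrix.det_mul, Matrix.det_mul, mul_comm (U.det), mul_assoc, ← Matrix.det_mul, hUU]
      simp
    rw [← hdetdiag _ t, ← hdetdiag _ t, hdet]
  have hpoly : (∏ i, (X - C ((hA.eigenvalues i : ℝ) : ℂ))) = ∏ i, (X - C ((v i : ℝ) : ℂ)) := by
    apply Polynomial.funext
    intro t
    simp only [eval_prod, eval_sub, eval_X, eval_C]
    exact hkey t
  have hroots : (Finset.univ.val.map (fun i => ((hA.eigenvalues i : ℝ) : ℂ)))
      = (Finset.univ.val.map (fun i => ((v i : ℝ) : ℂ))) := by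
    have h1 : ∀ (c : Fin n → ℂ), (∏ i, (X - C (c i))).roots = Finset.univ.val.map c := by
      intro c
      rw [Finset.prod_eq_multiset_prod, show (Multiset.map (fun i => X - C (c i)) Finset.univ.val) = (Multiset.map c Finset.univ.val).map (fun a => X - C a) by rw [Multiset.map_map]; rfl]
      exact Polynomial.roots_multiset_prod_X_sub_C _
    rw [← h1, ← h1, hpoly]
  have hF : ∀ (w : Fin n → ℝ), ∑ i, f (w i)
      = ((Finset.univ.val.map (fun i => ((w i : ℝ) : ℂ))).map (fun z => f z.re)).sum := by
    intro w
    rw [Multiset.map_map, Finset.sum_eq_multiset_sum]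
    congr 1
  rw [hF, hF, hroots]

lemma isHermitian_diag_real {n : ℕ} (v : Fin n → ℝ) :
    (Matrix.diagonal (fun i => ((v i : ℝ) : ℂ))).IsHermitian := by
  apply Matrix.isHermitian_diagonal_of_self_adjoint
  funext i
  exact Complex.conj_ofReal _

lemma vnEntropy_diag {n : ℕ} (v : Fin n → ℝ) :
    vnEntropy (Matrix.diagonal (fun i => ((v i : ℝ) : ℂ)))
      = -∑ i, v i * Real.logb 2 (v i) := by
  have hH := isHermitian_diag_real v
  rw [vnEntropy, dif_pos hH]
  exact congrArg Neg.neg (eig_sum v (fun x => x * Real.logb 2 x) hH)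

lemma chanNs_diag (s : ℝ) (hs0 : 0 ≤ s) (hs1 : s ≤ 1) (d : Fin 3 → ℂ) :
    chanNs s (Matrix.diagonal d) =
      Matrix.diagonal ![(s : ℂ) * d 0, ((1 - s : ℝ) : ℂ) * d 0, d 1 + d 2] := by
  have h1 : (Real.sqrt s : ℂ) * (Real.sqrt s : ℂ) = (s : ℂ) := by
    rw [← Complex.ofReal_mul, Real.mul_self_sqrt hs0]
  have h2 : (Real.sqrt (1 - s) : ℂ) * (Real.sqrt (1 - s) : ℂ) = ((1 - s : ℝ) : ℂ) := by
    rw [← Complex.ofReal_mul, Real.mul_self_sqrt (by linarith)]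
  have h1sq : (Real.sqrt s : ℂ) ^ 2 = (s : ℂ) := by rw [sq, h1]
  have h2sq : (Real.sqrt (1 - s) : ℂ) ^ 2 = ((1 - s : ℝ) : ℂ) := by rw [sq, h2]
  have hd : Matrix.diagonal d = !![d 0,0,0;0,d 1,0;0,0,d 2] := by
    ext i j
    fin_cases i <;> fin_cases j <;> simp [Matrix.diagonal_apply, Matrix.vecHead, Matrix.vecTail]
  rw [hd]
  ext i j
  fin_cases i <;> fin_cases j <;>
    simp [chanNs, Kr0, Kr1, Matrix.mul_apply, Fin.sum_univ_three, Matrix.diagonal_apply,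
      Matrix.conjTranspose_apply, Matrix.vecMul, dotProduct, Matrix.vecHead, Matrix.vecTail,
      Complex.conj_ofReal, h1, h2] <;>
    (ring_nf; simp only [h1sq, h2sq, Complex.ofReal_sub, Complex.ofReal_one]; try ring)

lemma chanNsc_diag (s : ℝ) (hs0 : 0 ≤ s) (hs1 : s ≤ 1) (d : Fin 3 → ℂ) :
    chanNsc s (Matrix.diagonal d) =
      Matrix.diagonal ![(s : ℂ) * d 0 + d 1, ((1 - s : ℝ) : ℂ) * d 0 + d 2] := by
  have h1 : (Real.sqrt s : ℂ) * (Real.sqrt s : ℂ) = (s : ℂ) := by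
    rw [← Complex.ofReal_mul, Real.mul_self_sqrt hs0]
  have h2 : (Real.sqrt (1 - s) : ℂ) * (Real.sqrt (1 - s) : ℂ) = ((1 - s : ℝ) : ℂ) := by
    rw [← Complex.ofReal_mul, Real.mul_self_sqrt (by linarith)]
  have h1sq : (Real.sqrt s : ℂ) ^ 2 = (s : ℂ) := by rw [sq, h1]
  have h2sq : (Real.sqrt (1 - s) : ℂ) ^ 2 = ((1 - s : ℝ) : ℂ) := by rw [sq, h2]
  have hd : Matrix.diagonal d = !![d 0,0,0;0,d 1,0;0,0,d 2] := by
    ext i j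
    fin_cases i <;> fin_cases j <;> simp [Matrix.diagonal_apply, Matrix.vecHead, Matrix.vecTail]
  rw [hd]
  ext i j
  fin_cases i <;> fin_cases j <;>
    simp [chanNsc, Lr0, Lr1, Lr2, Matrix.mul_apply, Fin.sum_univ_three, Matrix.diagonal_apply,
      Matrix.conjTranspose_apply, Matrix.vecMul, dotProduct, Matrix.vecHead, Matrix.vecTail,
      Complex.conj_ofReal, h1, h2] <;>
    (ring_nf; simp only [h1sq, h2sq, Complex.ofReal_sub, Complex.ofReal_one]; try ring)

lemma half_mul_logb_half (x : ℝ) (hx : 0 ≤ x) :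
    x / 2 * Real.logb 2 (x / 2) = x / 2 * Real.logb 2 x - x / 2 := by
  rcases eq_or_lt_of_le hx with h | h
  · simp [← h]
  · rw [Real.logb_div (by positivity) (by norm_num),
      Real.logb_self_eq_one (by norm_num : (1:ℝ) < 2)]
    ring

/-- The private-information ensemble {½, ρ¹; ½, ρ²} of the channel N_s achieves
Δ(N_s, ρ̄) − ½Δ(N_s, ρ¹) − ½Δ(N_s, ρ²) = 1, so P⁽¹⁾(N_s) ≥ 1. -/
theorem stmt5 (s : ℝ) (hs : s ∈ Set.Icc (0 : ℝ) (1/2)) :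
    let ρ1 : Matrix (Fin 3) (Fin 3) ℂ := Matrix.diagonal ![1, 0, 0]
    let ρ2 : Matrix (Fin 3) (Fin 3) ℂ := Matrix.diagonal ![0, (s : ℂ), ((1 - s : ℝ) : ℂ)]
    let ρbar : Matrix (Fin 3) (Fin 3) ℂ := (1/2 : ℂ) • ρ1 + (1/2 : ℂ) • ρ2
    (vnEntropy (chanNs s ρbar) - vnEntropy (chanNsc s ρbar)) -
      (1/2) * (vnEntropy (chanNs s ρ1) - vnEntropy (chanNsc s ρ1)) -
      (1/2) * (vnEntropy (chanNs s ρ2) - vnEntropy (chanNsc s ρ2)) = 1 := by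
  intro ρ1 ρ2 ρbar
  have hs0 : 0 ≤ s := hs.1
  have hs1 : s ≤ 1 := by linarith [hs.2]
  have hρbar : ρbar = Matrix.diagonal ![((1/2 : ℝ) : ℂ), ((s/2 : ℝ) : ℂ), (((1-s)/2 : ℝ) : ℂ)] := by
    show (1/2 : ℂ) • Matrix.diagonal ![1, 0, 0]
        + (1/2 : ℂ) • Matrix.diagonal ![0, (s : ℂ), ((1 - s : ℝ) : ℂ)] = _
    ext i j
    fin_cases i <;> fin_cases j <;>
      simp [Matrix.diagonal_apply, Matrix.vecHead, Matrix.vecTail] <;> push_cast <;> ring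
  -- channel outputs
  have e1 : chanNs s ρbar = Matrix.diagonal (fun i => ((![s/2, (1-s)/2, 1/2] i : ℝ) : ℂ)) := by
    rw [hρbar, chanNs_diag s hs0 hs1]
    ext i j
    fin_cases i <;> fin_cases j <;>
      simp [Matrix.diagonal_apply, Matrix.vecHead, Matrix.vecTail] <;> push_cast <;> ring
  have e2 : chanNsc s ρbar = Matrix.diagonal (fun i => ((![s, 1-s] i : ℝ) : ℂ)) := by
    rw [hρbar, chanNsc_diag s hs0 hs1]
    ext i j
    fin_cases i <;> fin_cases j <;>
      simp [Matrix.diagonal_apply, Matrix.vecHead, Matrix.vecTail] <;> push_cast <;> ring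
  have e3 : chanNs s ρ1 = Matrix.diagonal (fun i => ((![s, 1-s, 0] i : ℝ) : ℂ)) := by
    show chanNs s (Matrix.diagonal ![1, 0, 0]) = _
    rw [chanNs_diag s hs0 hs1]
    ext i j
    fin_cases i <;> fin_cases j <;>
      simp [Matrix.diagonal_apply, Matrix.vecHead, Matrix.vecTail] <;> push_cast <;> ring
  have e4 : chanNsc s ρ1 = Matrix.diagonal (fun i => ((![s, 1-s] i : ℝ) : ℂ)) := by
    show chanNsc s (Matrix.diagonal ![1, 0, 0]) = _
    rw [chanNsc_diag s hs0 hs1]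
    ext i j
    fin_cases i <;> fin_cases j <;>
      simp [Matrix.diagonal_apply, Matrix.vecHead, Matrix.vecTail] <;> push_cast <;> ring
  have e5 : chanNs s ρ2 = Matrix.diagonal (fun i => ((![0, 0, 1] i : ℝ) : ℂ)) := by
    show chanNs s (Matrix.diagonal ![0, (s : ℂ), ((1 - s : ℝ) : ℂ)]) = _
    rw [chanNs_diag s hs0 hs1]
    ext i j
    fin_cases i <;> fin_cases j <;>
      simp [Matrix.diagonal_apply, Matrix.vecHead, Matrix.vecTail] <;> push_cast <;> ring
  have e6 : chanNsc s ρ2 = Matrix.diagonal (fun i => ((![s, 1-s] i : ℝ) : ℂ)) := by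
    show chanNsc s (Matrix.diagonal ![0, (s : ℂ), ((1 - s : ℝ) : ℂ)]) = _
    rw [chanNsc_diag s hs0 hs1]
    ext i j
    fin_cases i <;> fin_cases j <;>
      simp [Matrix.diagonal_apply, Matrix.vecHead, Matrix.vecTail] <;> push_cast <;> ring
  rw [e1, e2, e3, e4, e5, e6]
  simp only [vnEntropy_diag]
  simp only [Fin.sum_univ_three, Fin.sum_univ_two, Matrix.cons_val_zero, Matrix.cons_val_one,
    Matrix.head_cons, Matrix.cons_val_two, Matrix.tail_cons]
  have H1 := half_mul_logb_half s hs0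
  have H2 := half_mul_logb_half (1 - s) (by linarith)
  have H3 : Real.logb 2 (1/2 : ℝ) = -1 := by
    rw [show (1/2 : ℝ) = 2⁻¹ by norm_num, Real.logb_inv,
      Real.logb_self_eq_one (by norm_num : (1:ℝ) < 2)]
  have H4 : Real.logb 2 (1 : ℝ) = 0 := Real.logb_one
  have H5 : Real.logb 2 (0 : ℝ) = 0 := Real.logb_zero
  rw [H3, H4, H5]
  linarith [H1, H2]
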